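/- arXiv:1807.00568 — 3 statements merged into one kernel-verified Lean document; each statement's English description precedes it below -/
import Mathlib

section
/- Estimation lemma: let κ > 0 and let Q ∈ R^{d×d} be symmetric positive definite with spectral norm ‖Q‖ ≤ C for some constant C > 0, and let B ∈ R^{d×d} be symmetric positive definite. Then ‖Q − Q(Q + κB)^{-1} κB‖ ≤ (C² ‖B^{-1}‖)/κ, where ‖·‖ denotes the spectral (operator) norm. -/
/-- The spectral (operator) norm of a real square matrix. -/
noncomputable def matSpectralNorm {d : ℕ} (A : Matrix (Fin d) (Fin d) ℝ) : ℝ :=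
  ‖(Matrix.toEuclideanCLM (𝕜 := ℝ) A :
      EuclideanSpace ℝ (Fin d) →L[ℝ] EuclideanSpace ℝ (Fin d))‖

open RealInnerProductSpace Matrix

namespace EstAux

variable {d : ℕ}

lemma inner_toCLM (A : Matrix (Fin d) (Fin d) ℝ) (x : EuclideanSpace ℝ (Fin d)) :
    ⟪x, Matrix.toEuclideanCLM (𝕜 := ℝ) A x⟫ =
      star (WithLp.equiv 2 _ x) ⬝ᵥ (A *ᵥ (WithLp.equiv 2 _ x)) := by
  simp [PiLp.inner_apply, RCLike.inner_apply, dotProduct, Matrix.mulVec]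
  exact Finset.sum_congr rfl fun _ _ => mul_comm _ _

lemma inner_nonneg_of_posSemidef {A : Matrix (Fin d) (Fin d) ℝ} (hA : A.PosSemidef)
    (x : EuclideanSpace ℝ (Fin d)) :
    0 ≤ ⟪x, Matrix.toEuclideanCLM (𝕜 := ℝ) A x⟫ := by
  rw [inner_toCLM]
  exact hA.dotProduct_mulVec_nonneg _

lemma spectralNorm_nonneg (A : Matrix (Fin d) (Fin d) ℝ) : 0 ≤ matSpectralNorm A :=
  norm_nonneg _

lemma spectralNorm_mul_le (A B : Matrix (Fin d) (Fin d) ℝ) :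
    matSpectralNorm (A * B) ≤ matSpectralNorm A * matSpectralNorm B := by
  unfold matSpectralNorm
  rw [_root_.map_mul]
  exact norm_mul_le _ _

/-- The key coercivity estimate: for positive definite `M`,
`‖x‖² ≤ ‖M⁻¹‖ * ⟪x, M x⟫`. -/
lemma norm_sq_le {M : Matrix (Fin d) (Fin d) ℝ} (hM : M.PosDef)
    (x : EuclideanSpace ℝ (Fin d)) :
    ‖x‖ ^ 2 ≤ matSpectralNorm M⁻¹ * ⟪x, Matrix.toEuclideanCLM (𝕜 := ℝ) M x⟫ := by
  set R : Matrix (Fin d) (Fin d) ℝ := open scoped MatrixOrder in CFC.sqrt M with hRdef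
  have hRR : R * R = M := open scoped MatrixOrder in CFC.sqrt_mul_sqrt_self M hM.posSemidef.nonneg
  have hRherm : Rᴴ = R := open scoped MatrixOrder in (CFC.sqrt_nonneg M).posSemidef.1
  have hdet : IsUnit R.det := by
    have h : R.det * R.det = M.det := by rw [← Matrix.det_mul, hRR]
    have h2 : IsUnit (R.det * R.det) := h ▸ hM.det_pos.ne'.isUnit
    exact isUnit_of_mul_isUnit_left h2
  set a := Matrix.toEuclideanCLM (𝕜 := ℝ) R with ha
  set b := Matrix.toEuclideanCLM (𝕜 := ℝ) R⁻¹ with hb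
  have hba : b * a = 1 := by
    rw [ha, hb, ← _root_.map_mul, Matrix.nonsing_inv_mul _ hdet, _root_.map_one]
  -- star a = a
  have hstar : star a = a := by
    have hsR : star R = R := hRherm
    rw [ha, ← map_star, hsR]
  have hadj : ContinuousLinearMap.adjoint a = a := by
    rw [← ContinuousLinearMap.star_eq_adjoint]; exact hstar
  -- ⟪x, M x⟫ = ‖a x‖²
  have hinner : ⟪x, Matrix.toEuclideanCLM (𝕜 := ℝ) M x⟫ = ‖a x‖ ^ 2 := by
    have hMa : Matrix.toEuclideanCLM (𝕜 := ℝ) M x = a (a x) := by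
      rw [← hRR, _root_.map_mul]; rfl
    have h2 := ContinuousLinearMap.adjoint_inner_right a x (a x)
    rw [hadj] at h2
    rw [hMa, h2, real_inner_self_eq_norm_sq]
  -- ‖x‖ ≤ ‖b‖ ‖a x‖
  have hxb : ‖x‖ ≤ ‖b‖ * ‖a x‖ := by
    have hxe : x = b (a x) := by
      have h3 : (b * a) x = x := by rw [hba]; rfl
      exact h3.symm
    calc ‖x‖ = ‖b (a x)‖ := by rw [← hxe]
    _ ≤ ‖b‖ * ‖a x‖ := b.le_opNorm _
  -- ‖b‖² = ‖M⁻¹‖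
  have hbsq : ‖b‖ * ‖b‖ = matSpectralNorm M⁻¹ := by
    have h1 : star b * b = Matrix.toEuclideanCLM (𝕜 := ℝ) M⁻¹ := by
      rw [hb, ← map_star, ← _root_.map_mul]
      congr 1
      rw [Matrix.star_eq_conjTranspose, Matrix.conjTranspose_nonsing_inv, hRherm,
        ← Matrix.mul_inv_rev, hRR]
    calc ‖b‖ * ‖b‖ = ‖star b * b‖ := (CStarRing.norm_star_mul_self).symm
    _ = matSpectralNorm M⁻¹ := by rw [h1]; rfl
  calc ‖x‖ ^ 2 ≤ (‖b‖ * ‖a x‖) ^ 2 := by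
        apply pow_le_pow_left₀ (norm_nonneg _) hxb
  _ = (‖b‖ * ‖b‖) * ‖a x‖ ^ 2 := by ring
  _ = matSpectralNorm M⁻¹ * ⟪x, Matrix.toEuclideanCLM (𝕜 := ℝ) M x⟫ := by
        rw [hbsq, hinner]

/-- If `M ≤ N` in the Loewner order (both posdef), then `‖N⁻¹‖ ≤ ‖M⁻¹‖`. -/
lemma inv_norm_le {M N : Matrix (Fin d) (Fin d) ℝ} (hM : M.PosDef) (hN : N.PosDef)
    (h : ∀ x : EuclideanSpace ℝ (Fin d),
      ⟪x, Matrix.toEuclideanCLM (𝕜 := ℝ) M x⟫ ≤ ⟪x, Matrix.toEuclideanCLM (𝕜 := ℝ) N x⟫) :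
    matSpectralNorm N⁻¹ ≤ matSpectralNorm M⁻¹ := by
  have hNunit : IsUnit N.det := (Matrix.isUnit_iff_isUnit_det _).mp hN.isUnit
  apply ContinuousLinearMap.opNorm_le_bound _ (spectralNorm_nonneg M⁻¹)
  intro y
  set x := Matrix.toEuclideanCLM (𝕜 := ℝ) N⁻¹ y with hx
  have hNx : Matrix.toEuclideanCLM (𝕜 := ℝ) N x = y := by
    rw [hx]
    have h4 : (Matrix.toEuclideanCLM (𝕜 := ℝ) N * Matrix.toEuclideanCLM (𝕜 := ℝ) N⁻¹) y = y := by
      rw [← _root_.map_mul, Matrix.mul_nonsing_inv _ hNunit, _root_.map_one]; rfl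
    exact h4
  have key : ‖x‖ * ‖x‖ ≤ (matSpectralNorm M⁻¹ * ‖y‖) * ‖x‖ := by
    have h6 : ‖x‖ ^ 2 ≤ matSpectralNorm M⁻¹ * (‖x‖ * ‖y‖) := calc
      ‖x‖ ^ 2 ≤ matSpectralNorm M⁻¹ * ⟪x, Matrix.toEuclideanCLM (𝕜 := ℝ) M x⟫ :=
          norm_sq_le hM x
      _ ≤ matSpectralNorm M⁻¹ * ⟪x, Matrix.toEuclideanCLM (𝕜 := ℝ) N x⟫ :=
          mul_le_mul_of_nonneg_left (h x) (spectralNorm_nonneg _)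
      _ = matSpectralNorm M⁻¹ * ⟪x, y⟫ := by rw [hNx]
      _ ≤ matSpectralNorm M⁻¹ * (‖x‖ * ‖y‖) :=
          mul_le_mul_of_nonneg_left (real_inner_le_norm x y) (spectralNorm_nonneg _)
    nlinarith [h6]
  rcases eq_or_lt_of_le (norm_nonneg x) with h0 | h0
  · rw [← h0]
    exact mul_nonneg (spectralNorm_nonneg _) (norm_nonneg _)
  · exact le_of_mul_le_mul_right key h0

end EstAux

set_option synthInstance.maxHeartbeats 1000000 in
set_option maxHeartbeats 1000000 in
/-- Estimation lemma: `‖Q − Q(Q + κB)⁻¹ κB‖ ≤ C² ‖B⁻¹‖ / κ`. -/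
theorem estimation_lemma {d : ℕ} (Q B : Matrix (Fin d) (Fin d) ℝ) (κ C : ℝ)
    (hQ : Q.PosDef) (hB : B.PosDef) (hκ : 0 < κ) (hC : 0 < C)
    (hQnorm : matSpectralNorm Q ≤ C) :
    matSpectralNorm (Q - Q * (Q + κ • B)⁻¹ * (κ • B)) ≤ C ^ 2 * matSpectralNorm B⁻¹ / κ := by
  -- κ • B is positive definite
  have hκB : (κ • B).PosDef := by
    refine Matrix.PosDef.of_dotProduct_mulVec_pos ?_ fun x hx => ?_
    · unfold Matrix.IsHermitian
      rw [Matrix.conjTranspose_smul, hB.1.eq]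
      simp
    · rw [Matrix.smul_mulVec, dotProduct_smul]
      exact smul_pos hκ (hB.dotProduct_mulVec_pos hx)
  -- S := Q + κ • B is positive definite
  have hS : (Q + κ • B).PosDef := hQ.add hκB
  set S := Q + κ • B with hSdef
  have hSunit : IsUnit S.det := (Matrix.isUnit_iff_isUnit_det _).mp hS.isUnit
  -- the algebraic identity
  have hid : Q - Q * S⁻¹ * (κ • B) = Q * S⁻¹ * Q := by
    have h1 : Q * S⁻¹ * S = Q := by
      rw [Matrix.mul_assoc, Matrix.nonsing_inv_mul _ hSunit, Matrix.mul_one]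
    calc Q - Q * S⁻¹ * (κ • B) = Q * S⁻¹ * S - Q * S⁻¹ * (κ • B) := by rw [h1]
    _ = Q * S⁻¹ * (S - κ • B) := by rw [Matrix.mul_sub]
    _ = Q * S⁻¹ * Q := by rw [hSdef, add_sub_cancel_right]
  rw [hid]
  -- norm of S⁻¹
  have hSinv : matSpectralNorm S⁻¹ ≤ matSpectralNorm (κ • B)⁻¹ :=
    EstAux.inv_norm_le hκB hS fun x => by
      rw [EstAux.inner_toCLM, EstAux.inner_toCLM, hSdef, Matrix.add_mulVec,
        dotProduct_add]
      have := hQ.posSemidef.dotProduct_mulVec_nonneg (WithLp.equiv 2 _ x)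
      linarith
  -- (κ • B)⁻¹ = κ⁻¹ • B⁻¹
  have hinvsmul : (κ • B)⁻¹ = κ⁻¹ • B⁻¹ := by
    apply Matrix.inv_eq_left_inv
    rw [Matrix.smul_mul, Matrix.mul_smul, Matrix.nonsing_inv_mul _
      ((Matrix.isUnit_iff_isUnit_det _).mp hB.isUnit), smul_smul,
      inv_mul_cancel₀ hκ.ne', one_smul]
  have hκBnorm : matSpectralNorm (κ • B)⁻¹ = κ⁻¹ * matSpectralNorm B⁻¹ := by
    rw [hinvsmul]
    unfold matSpectralNorm
    rw [_root_.map_smul]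
    rw [norm_smul κ⁻¹ (Matrix.toEuclideanCLM (𝕜 := ℝ) B⁻¹)]
    simp [abs_of_pos (inv_pos.mpr hκ)]
    exact Or.inl hκ.le
  -- combine
  have h1 : matSpectralNorm (Q * S⁻¹ * Q) ≤ matSpectralNorm Q * matSpectralNorm S⁻¹ * matSpectralNorm Q :=
    calc matSpectralNorm (Q * S⁻¹ * Q) ≤ matSpectralNorm (Q * S⁻¹) * matSpectralNorm Q :=
          EstAux.spectralNorm_mul_le _ _
    _ ≤ matSpectralNorm Q * matSpectralNorm S⁻¹ * matSpectralNorm Q :=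
          mul_le_mul_of_nonneg_right (EstAux.spectralNorm_mul_le _ _)
            (EstAux.spectralNorm_nonneg _)
  have hQ0 : 0 ≤ matSpectralNorm Q := EstAux.spectralNorm_nonneg _
  have hS0 : 0 ≤ matSpectralNorm S⁻¹ := EstAux.spectralNorm_nonneg _
  have hB0 : 0 ≤ matSpectralNorm B⁻¹ := EstAux.spectralNorm_nonneg _
  have ht0 : 0 ≤ κ⁻¹ * matSpectralNorm B⁻¹ := mul_nonneg (inv_pos.mpr hκ).le hB0
  have hS1 : matSpectralNorm S⁻¹ ≤ κ⁻¹ * matSpectralNorm B⁻¹ := hκBnorm ▸ hSinv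
  have h2 : matSpectralNorm Q * matSpectralNorm S⁻¹ * matSpectralNorm Q
      ≤ C * (κ⁻¹ * matSpectralNorm B⁻¹) * C :=
    calc matSpectralNorm Q * matSpectralNorm S⁻¹ * matSpectralNorm Q
        ≤ C * matSpectralNorm S⁻¹ * matSpectralNorm Q := by
          apply mul_le_mul_of_nonneg_right (mul_le_mul_of_nonneg_right hQnorm hS0) hQ0
    _ ≤ C * (κ⁻¹ * matSpectralNorm B⁻¹) * matSpectralNorm Q := by
          apply mul_le_mul_of_nonneg_right (mul_le_mul_of_nonneg_left hS1 hC.le) hQ0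
    _ ≤ C * (κ⁻¹ * matSpectralNorm B⁻¹) * C := by
          apply mul_le_mul_of_nonneg_left hQnorm (mul_nonneg hC.le ht0)
  calc matSpectralNorm (Q * S⁻¹ * Q) ≤ C * (κ⁻¹ * matSpectralNorm B⁻¹) * C := le_trans h1 h2
  _ = C ^ 2 * matSpectralNorm B⁻¹ / κ := by field_simp
end

section
/- Bound on the Kalman gain matrix: let Q ∈ R^{d×d} be symmetric positive semidefinite with ‖Q‖ ≤ C, let Σ ∈ R^{d×d} be symmetric positive definite, and λ > 0. Then the matrix P = λ Q (Q + λΣ)^{-1} satisfies ‖P‖ ≤ C ‖Σ^{-1}‖, uniformly in λ. -/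
open Matrix in
private lemma dp_symm' {d : ℕ} {P : Matrix (Fin d) (Fin d) ℝ} (hP : P.IsHermitian)
    (x y : Fin d → ℝ) : x ⬝ᵥ (P *ᵥ y) = y ⬝ᵥ (P *ᵥ x) := by
  have hPt : Pᵀ = P := by rw [← conjTranspose_eq_transpose_of_trivial]; exact hP
  rw [dotProduct_mulVec, ← mulVec_transpose, hPt, dotProduct_comm]

open Matrix in
private lemma dp_cs' {d : ℕ} {P : Matrix (Fin d) (Fin d) ℝ} (hP : P.PosSemidef)
    (x y : Fin d → ℝ) :
    (x ⬝ᵥ (P *ᵥ y)) ^ 2 ≤ (x ⬝ᵥ (P *ᵥ x)) * (y ⬝ᵥ (P *ᵥ y)) := by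
  have key : ∀ t : ℝ,
      0 ≤ (y ⬝ᵥ (P *ᵥ y)) * (t * t) + (2 * (x ⬝ᵥ (P *ᵥ y))) * t + x ⬝ᵥ (P *ᵥ x) := by
    intro t
    have h0 := hP.dotProduct_mulVec_nonneg (x + t • y)
    simp only [star_trivial, mulVec_add, mulVec_smul, dotProduct_add, add_dotProduct,
      dotProduct_smul, smul_dotProduct, smul_eq_mul] at h0
    have hsym := dp_symm' hP.1 x y
    have hexp : (y ⬝ᵥ (P *ᵥ y)) * (t * t) + (2 * (x ⬝ᵥ (P *ᵥ y))) * t + x ⬝ᵥ (P *ᵥ x)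
        = x ⬝ᵥ P *ᵥ x + t * (y ⬝ᵥ P *ᵥ x) + t * (x ⬝ᵥ P *ᵥ y + t * (y ⬝ᵥ P *ᵥ y)) := by
      rw [hsym]; ring
    rw [hexp]
    exact h0
  have hd := discrim_le_zero key
  simp only [discrim] at hd
  nlinarith [hd]

open Matrix in
private lemma inner_eq_dp' {d : ℕ} (x y : EuclideanSpace ℝ (Fin d)) :
    (inner ℝ x y : ℝ) = (WithLp.equiv 2 _ x) ⬝ᵥ (WithLp.equiv 2 _ y) := by
  simp [PiLp.inner_apply, dotProduct, mul_comm]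

open Matrix in
private lemma dp_le_spectral' {d : ℕ} (P : Matrix (Fin d) (Fin d) ℝ) (v : Fin d → ℝ) :
    v ⬝ᵥ (P *ᵥ v) ≤ matSpectralNorm P * (v ⬝ᵥ v) := by
  set x : EuclideanSpace ℝ (Fin d) := (WithLp.equiv 2 _).symm v with hx
  have hv : WithLp.equiv 2 _ x = v := rfl
  have h1 : v ⬝ᵥ (P *ᵥ v) = (inner ℝ x ((Matrix.toEuclideanCLM (𝕜 := ℝ) P) x) : ℝ) := by
    rw [inner_eq_dp']; rfl
  have h2 : v ⬝ᵥ v = ‖x‖ ^ 2 := by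
    rw [← real_inner_self_eq_norm_sq, inner_eq_dp', hv]
  rw [h1, h2]
  calc (inner ℝ x ((Matrix.toEuclideanCLM (𝕜 := ℝ) P) x) : ℝ)
      ≤ ‖x‖ * ‖(Matrix.toEuclideanCLM (𝕜 := ℝ) P) x‖ := real_inner_le_norm _ _
    _ ≤ ‖x‖ * (matSpectralNorm P * ‖x‖) := by
        refine mul_le_mul_of_nonneg_left ?_ (norm_nonneg _)
        exact ContinuousLinearMap.le_opNorm _ _
    _ = matSpectralNorm P * ‖x‖ ^ 2 := by ring

open Matrix in
private lemma spectral_le_of_form' {d : ℕ} (M : Matrix (Fin d) (Fin d) ℝ) (hM : M.PosSemidef)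
    (C : ℝ) (hC : 0 ≤ C) (hform : ∀ v : Fin d → ℝ, v ⬝ᵥ (M *ᵥ v) ≤ C * (v ⬝ᵥ v)) :
    matSpectralNorm M ≤ C := by
  refine ContinuousLinearMap.opNorm_le_bound _ hC (fun x => ?_)
  set v : Fin d → ℝ := WithLp.equiv 2 _ x with hv
  set w : Fin d → ℝ := M *ᵥ v with hw
  have hTx : ‖(Matrix.toEuclideanCLM (𝕜 := ℝ) M) x‖ ^ 2 = w ⬝ᵥ w := by
    rw [← real_inner_self_eq_norm_sq, inner_eq_dp']; rfl
  have hxx : ‖x‖ ^ 2 = v ⬝ᵥ v := by rw [← real_inner_self_eq_norm_sq, inner_eq_dp']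
  have h1 : w ⬝ᵥ w = v ⬝ᵥ (M *ᵥ w) := by rw [dp_symm' hM.1 v w, hw]
  have cs := dp_cs' hM v w
  have h2 : v ⬝ᵥ (M *ᵥ v) ≤ C * (v ⬝ᵥ v) := hform v
  have h3 : w ⬝ᵥ (M *ᵥ w) ≤ C * (w ⬝ᵥ w) := hform w
  have hvv : 0 ≤ v ⬝ᵥ v := hxx ▸ sq_nonneg _
  have hww : 0 ≤ w ⬝ᵥ w := hTx ▸ sq_nonneg _
  have hMw : 0 ≤ w ⬝ᵥ (M *ᵥ w) := by simpa using hM.dotProduct_mulVec_nonneg w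
  have hmul : (v ⬝ᵥ (M *ᵥ v)) * (w ⬝ᵥ (M *ᵥ w)) ≤ (C * (v ⬝ᵥ v)) * (C * (w ⬝ᵥ w)) :=
    mul_le_mul h2 h3 hMw (le_trans (by simpa using hM.dotProduct_mulVec_nonneg v) h2)
  have key : (w ⬝ᵥ w) ^ 2 ≤ C ^ 2 * ((v ⬝ᵥ v) * (w ⬝ᵥ w)) := by
    calc (w ⬝ᵥ w) ^ 2 = (v ⬝ᵥ (M *ᵥ w)) ^ 2 := by rw [h1]
      _ ≤ (v ⬝ᵥ (M *ᵥ v)) * (w ⬝ᵥ (M *ᵥ w)) := cs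
      _ ≤ (C * (v ⬝ᵥ v)) * (C * (w ⬝ᵥ w)) := hmul
      _ = C ^ 2 * ((v ⬝ᵥ v) * (w ⬝ᵥ w)) := by ring
  set a := ‖(Matrix.toEuclideanCLM (𝕜 := ℝ) M) x‖ with hadef
  have ha : 0 ≤ a := norm_nonneg _
  have hb : 0 ≤ ‖x‖ := norm_nonneg _
  by_cases h0 : a = 0
  · rw [h0]; positivity
  · have hapos : 0 < a ^ 2 := by positivity
    have key2 : a ^ 2 * a ^ 2 ≤ C ^ 2 * ‖x‖ ^ 2 * a ^ 2 := by
      rw [hTx, hxx]; nlinarith [key]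
    have h5 : a ^ 2 ≤ C ^ 2 * ‖x‖ ^ 2 := le_of_mul_le_mul_right key2 hapos
    calc a = Real.sqrt (a ^ 2) := (Real.sqrt_sq ha).symm
      _ ≤ Real.sqrt (C ^ 2 * ‖x‖ ^ 2) := Real.sqrt_le_sqrt h5
      _ = C * ‖x‖ := by rw [← mul_pow, Real.sqrt_sq (mul_nonneg hC hb)]

/-- Bound on the Kalman gain matrix:
`‖λ Q (Q + λS)⁻¹‖ ≤ C ‖S⁻¹‖`, uniformly in `λ > 0`. -/
theorem kalman_gain_bound {d : ℕ} (Q S : Matrix (Fin d) (Fin d) ℝ) (C l : ℝ)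
    (hQ : Q.PosSemidef) (hS : S.PosDef) (hl : 0 < l)
    (hQC : matSpectralNorm Q ≤ C) :
    matSpectralNorm (l • (Q * (Q + l • S)⁻¹)) ≤ C * matSpectralNorm S⁻¹ := by
  open Matrix in
  have hC0 : 0 ≤ C := le_trans (norm_nonneg _) hQC
  set A : Matrix (Fin d) (Fin d) ℝ := Q + l • S with hAdef
  have hlS : (l • S).PosDef := by
    refine Matrix.PosDef.of_dotProduct_mulVec_pos ?_ (fun x hx => ?_)
    · have h := hS.1
      unfold Matrix.IsHermitian at h ⊢
      rw [conjTranspose_smul, h]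
      simp
    · rw [smul_mulVec, dotProduct_smul, smul_eq_mul]
      exact mul_pos hl (hS.dotProduct_mulVec_pos hx)
  have hA : A.PosDef := Matrix.PosDef.posSemidef_add hQ hlS
  have hAu : IsUnit A.det := hA.det_pos.ne'.isUnit
  have hSu : IsUnit S.det := hS.det_pos.ne'.isUnit
  set M : Matrix (Fin d) (Fin d) ℝ := Q - Q * A⁻¹ * Q with hMdef
  -- the key algebraic identity
  have hid : l • (Q * A⁻¹) = M * S⁻¹ := by
    have h1 : M = Q * A⁻¹ * (l • S) := by
      have h2 : Q * A⁻¹ * A = Q := by rw [mul_assoc, nonsing_inv_mul A hAu, mul_one]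
      calc M = Q * A⁻¹ * A - Q * A⁻¹ * Q := by rw [h2]
        _ = Q * A⁻¹ * (A - Q) := by noncomm_ring
        _ = Q * A⁻¹ * (l • S) := by rw [hAdef]; congr 1; abel
    rw [h1, mul_assoc, Matrix.smul_mul, Matrix.mul_smul, mul_nonsing_inv S hSu, mul_one,
      ← Matrix.mul_smul]
  -- the quadratic form of M is between 0 and that of Q
  have hQAQ : (Q * A⁻¹ * Q).PosSemidef := by
    have h := hA.inv.posSemidef.conjTranspose_mul_mul_same Q
    rwa [hQ.1] at h
  have hforms : ∀ v : Fin d → ℝ,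
      0 ≤ v ⬝ᵥ (M *ᵥ v) ∧ v ⬝ᵥ (M *ᵥ v) ≤ v ⬝ᵥ (Q *ᵥ v) := by
    intro v
    set y : Fin d → ℝ := A⁻¹ *ᵥ (Q *ᵥ v) with hy
    have hAy : A *ᵥ y = Q *ᵥ v := by
      rw [hy, mulVec_mulVec, mul_nonsing_inv A hAu, one_mulVec]
    have hMv : v ⬝ᵥ (M *ᵥ v) = v ⬝ᵥ (Q *ᵥ v) - v ⬝ᵥ (Q *ᵥ y) := by
      rw [hMdef, sub_mulVec, dotProduct_sub]
      congr 2
      rw [hy, ← mulVec_mulVec, ← mulVec_mulVec]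
    set t : ℝ := y ⬝ᵥ (A *ᵥ y) with htdef
    have ht : v ⬝ᵥ (Q *ᵥ y) = t := by
      rw [dp_symm' hQ.1 v y, htdef, hAy]
    have ht0 : 0 ≤ t := by simpa using hA.posSemidef.dotProduct_mulVec_nonneg y
    have hyQy : y ⬝ᵥ (Q *ᵥ y) ≤ t := by
      have hsub : t - y ⬝ᵥ (Q *ᵥ y) = y ⬝ᵥ ((l • S) *ᵥ y) := by
        have hAQ : A - Q = l • S := by rw [hAdef]; abel
        rw [htdef, ← dotProduct_sub, ← sub_mulVec, hAQ]
      have : 0 ≤ y ⬝ᵥ ((l • S) *ᵥ y) := by simpa using hlS.posSemidef.dotProduct_mulVec_nonneg y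
      linarith [hsub ▸ this]
    have hvQv0 : 0 ≤ v ⬝ᵥ (Q *ᵥ v) := by simpa using hQ.dotProduct_mulVec_nonneg v
    have hcs := dp_cs' hQ v y
    -- t ^ 2 ≤ (v ⬝ᵥ Q v) * t
    have htle : t ≤ v ⬝ᵥ (Q *ᵥ v) := by
      rcases eq_or_lt_of_le ht0 with h | h
      · rw [← h]; exact hvQv0
      · have h6 : t * t ≤ (v ⬝ᵥ (Q *ᵥ v)) * t := by
          calc t * t = (v ⬝ᵥ (Q *ᵥ y)) ^ 2 := by rw [ht]; ring
            _ ≤ (v ⬝ᵥ (Q *ᵥ v)) * (y ⬝ᵥ (Q *ᵥ y)) := hcs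
            _ ≤ (v ⬝ᵥ (Q *ᵥ v)) * t := mul_le_mul_of_nonneg_left hyQy hvQv0
        exact le_of_mul_le_mul_right h6 h
    constructor
    · rw [hMv, ht]; linarith
    · rw [hMv, ht]; linarith
  have hM : M.PosSemidef := by
    refine Matrix.PosSemidef.of_dotProduct_mulVec_nonneg (hQ.1.sub hQAQ.1) (fun v => ?_)
    simpa using (hforms v).1
  have hMC : matSpectralNorm M ≤ C := by
    refine spectral_le_of_form' M hM C hC0 (fun v => ?_)
    have hvv : 0 ≤ v ⬝ᵥ v := Finset.sum_nonneg fun i _ => mul_self_nonneg _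
    calc v ⬝ᵥ (M *ᵥ v) ≤ v ⬝ᵥ (Q *ᵥ v) := (hforms v).2
      _ ≤ matSpectralNorm Q * (v ⬝ᵥ v) := dp_le_spectral' Q v
      _ ≤ C * (v ⬝ᵥ v) := mul_le_mul_of_nonneg_right hQC hvv
  calc matSpectralNorm (l • (Q * A⁻¹)) = matSpectralNorm (M * S⁻¹) := by rw [hid]
    _ ≤ matSpectralNorm M * matSpectralNorm S⁻¹ := by
        unfold matSpectralNorm; rw [_root_.map_mul]; exact norm_mul_le _ _
    _ ≤ C * matSpectralNorm S⁻¹ := mul_le_mul_of_nonneg_right hMC (norm_nonneg _)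
end

section
/- Difference of scaled gains: let Q ∈ R^{d×d} be symmetric positive semidefinite with ‖Q‖ ≤ C, Σ ∈ R^{d×d} symmetric positive definite, λ > 0. Then ‖λ Q (Q + λΣ)^{-1} Q − Q Σ^{-1} Q‖ ≤ C³ ‖Σ^{-1}‖² / λ. -/
open Matrix
open scoped Matrix.Norms.L2Operator

namespace SGDB

variable {d : ℕ}

local notation "T" => Matrix.toEuclideanCLM (𝕜 := ℝ) (n := Fin d)

lemma spec_eq (A : Matrix (Fin d) (Fin d) ℝ) : matSpectralNorm A = ‖A‖ := rfl

lemma norm_eq (A : Matrix (Fin d) (Fin d) ℝ) : ‖A‖ = ‖T A‖ := rfl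

lemma inner_T (A : Matrix (Fin d) (Fin d) ℝ) (x y : EuclideanSpace ℝ (Fin d)) :
    inner (𝕜 := ℝ) x (T A y) =
      dotProduct (WithLp.equiv 2 _ x) (A *ᵥ WithLp.equiv 2 _ y) := by
  rw [EuclideanSpace.inner_eq_star_dotProduct]
  simp [dotProduct_comm]

lemma inner_T_nonneg {A : Matrix (Fin d) (Fin d) ℝ} (hA : A.PosSemidef)
    (x : EuclideanSpace ℝ (Fin d)) : 0 ≤ inner (𝕜 := ℝ) x (T A x) := by
  rw [inner_T]
  simpa using hA.dotProduct_mulVec_nonneg (WithLp.equiv 2 _ x)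

lemma inner_T_sa {A : Matrix (Fin d) (Fin d) ℝ} (hA : A.IsHermitian)
    (x y : EuclideanSpace ℝ (Fin d)) :
    inner (𝕜 := ℝ) (T A x) y = inner (𝕜 := ℝ) x (T A y) := by
  have hsa : ContinuousLinearMap.adjoint (T A) = T A := by
    rw [← ContinuousLinearMap.star_eq_adjoint, ← map_star, Matrix.star_eq_conjTranspose, hA.eq]
  calc inner (𝕜 := ℝ) (T A x) y
      = inner (𝕜 := ℝ) (ContinuousLinearMap.adjoint (T A) x) y := by rw [hsa]
    _ = inner (𝕜 := ℝ) x (T A y) := ContinuousLinearMap.adjoint_inner_left _ _ _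

open scoped MatrixOrder in
lemma coercive {S : Matrix (Fin d) (Fin d) ℝ} (hS : S.PosDef)
    (x : EuclideanSpace ℝ (Fin d)) :
    ‖x‖ ^ 2 ≤ ‖T S⁻¹‖ * inner (𝕜 := ℝ) x (T S x) := by
  classical
  set R := CFC.sqrt S with hRdef
  have hR : R.PosSemidef := (CFC.sqrt_nonneg S).posSemidef
  have hRR : R * R = S := CFC.sqrt_mul_sqrt_self S hS.posSemidef.nonneg
  have hdet : IsUnit R.det := by
    have h2 : R.det * R.det = S.det := by rw [← Matrix.det_mul, hRR]
    have := hS.det_pos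
    refine isUnit_iff_ne_zero.mpr fun h => ?_
    rw [h, mul_zero] at h2
    rw [← h2] at this
    exact lt_irrefl _ this
  have h1 : R * R⁻¹ = 1 := Matrix.mul_nonsing_inv _ hdet
  have h2 : S⁻¹ = R⁻¹ * R⁻¹ := by rw [← hRR, Matrix.mul_inv_rev]
  have hxx : inner (𝕜 := ℝ) x x = inner (𝕜 := ℝ) (T R x) (T R⁻¹ x) := by
    rw [inner_T_sa hR.1]
    have : T R (T R⁻¹ x) = x := by
      rw [← ContinuousLinearMap.comp_apply, ← ContinuousLinearMap.mul_def,
        ← _root_.map_mul, h1, _root_.map_one, ContinuousLinearMap.one_apply]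
    rw [this]
  have hnR : ‖T R x‖ ^ 2 = inner (𝕜 := ℝ) x (T S x) := by
    rw [← real_inner_self_eq_norm_sq, inner_T_sa hR.1]
    congr 1
    rw [← ContinuousLinearMap.comp_apply, ← ContinuousLinearMap.mul_def, ← _root_.map_mul, hRR]
  have hRiH : (R⁻¹).IsHermitian := hR.1.inv
  have hnRi : ‖T R⁻¹ x‖ ^ 2 ≤ ‖T S⁻¹‖ * ‖x‖ ^ 2 := by
    have e1 : ‖T R⁻¹ x‖ ^ 2 = inner (𝕜 := ℝ) x (T S⁻¹ x) := by
      rw [← real_inner_self_eq_norm_sq, inner_T_sa hRiH]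
      congr 1
      rw [← ContinuousLinearMap.comp_apply, ← ContinuousLinearMap.mul_def, ← _root_.map_mul, ← h2]
    rw [e1]
    calc inner (𝕜 := ℝ) x (T S⁻¹ x) ≤ ‖x‖ * ‖T S⁻¹ x‖ := real_inner_le_norm _ _
      _ ≤ ‖x‖ * (‖T S⁻¹‖ * ‖x‖) := by
          have := (T S⁻¹).le_opNorm x
          exact mul_le_mul_of_nonneg_left this (norm_nonneg x)
      _ = ‖T S⁻¹‖ * ‖x‖ ^ 2 := by ring
  have hcs : inner (𝕜 := ℝ) (T R x) (T R⁻¹ x) ≤ ‖T R x‖ * ‖T R⁻¹ x‖ := real_inner_le_norm _ _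
  have hx2 : ‖x‖ ^ 2 = inner (𝕜 := ℝ) x x := (real_inner_self_eq_norm_sq x).symm
  by_cases hx : ‖x‖ = 0
  · rw [hx]
    have h := inner_T_nonneg hS.posSemidef x
    have hN : (0:ℝ) ≤ ‖T S⁻¹‖ := norm_nonneg _
    calc (0:ℝ) ^ 2 = 0 := by ring
      _ ≤ _ := mul_nonneg hN h
  · have hxpos : 0 < ‖x‖ := lt_of_le_of_ne (norm_nonneg x) (Ne.symm hx)
    have key : (‖x‖ ^ 2) ^ 2 ≤ (inner (𝕜 := ℝ) x (T S x)) * (‖T S⁻¹‖ * ‖x‖ ^ 2) := by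
      have h4 : ‖x‖ ^ 2 ≤ ‖T R x‖ * ‖T R⁻¹ x‖ := by rw [hx2, hxx]; exact hcs
      have h5 : (‖T R x‖ * ‖T R⁻¹ x‖) ^ 2 = ‖T R x‖ ^ 2 * ‖T R⁻¹ x‖ ^ 2 := by ring
      nlinarith [norm_nonneg (T R x), norm_nonneg (T R⁻¹ x), sq_nonneg (‖x‖),
        inner_T_nonneg hS.posSemidef x]
    nlinarith [key, mul_pos hxpos hxpos, inner_T_nonneg hS.posSemidef x]

lemma smul_posDef {S : Matrix (Fin d) (Fin d) ℝ} (hS : S.PosDef) {l : ℝ} (hl : 0 < l) :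
    (l • S).PosDef := by
  refine ⟨?_, fun x hx => ?_⟩
  · unfold Matrix.IsHermitian
    rw [Matrix.conjTranspose_smul, hS.1]
    simp
  · have h := mul_pos hl (hS.2 hx)
    rw [Finsupp.mul_sum] at h
    simpa [Finsupp.mul_sum, mul_assoc, mul_left_comm] using h

lemma inv_norm_bound {Q S : Matrix (Fin d) (Fin d) ℝ} {l : ℝ}
    (hQ : Q.PosSemidef) (hS : S.PosDef) (hl : 0 < l) :
    ‖(Q + l • S)⁻¹‖ ≤ ‖S⁻¹‖ / l := by
  classical
  set M := Q + l • S with hMdef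
  have hM : M.PosDef := Matrix.PosDef.posSemidef_add hQ (smul_posDef hS hl)
  have hMd : IsUnit M.det := (Matrix.isUnit_iff_isUnit_det M).mp hM.isUnit
  rw [norm_eq, norm_eq]
  refine ContinuousLinearMap.opNorm_le_bound _ (by positivity) fun x => ?_
  set y := T M⁻¹ x with hydef
  have hMy : T M y = x := by
    rw [hydef, ← ContinuousLinearMap.comp_apply, ← ContinuousLinearMap.mul_def,
      ← _root_.map_mul, Matrix.mul_nonsing_inv _ hMd, _root_.map_one, ContinuousLinearMap.one_apply]
  have h1 : ‖y‖ ^ 2 ≤ ‖T S⁻¹‖ * inner (𝕜 := ℝ) y (T S y) := coercive hS y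
  have h2 : l * inner (𝕜 := ℝ) y (T S y) ≤ inner (𝕜 := ℝ) y (T M y) := by
    have hq := inner_T_nonneg hQ y
    have e : inner (𝕜 := ℝ) y (T M y) =
        inner (𝕜 := ℝ) y (T Q y) + l * inner (𝕜 := ℝ) y (T S y) := by
      rw [hMdef, map_add, _root_.map_smul, ContinuousLinearMap.add_apply,
        ContinuousLinearMap.smul_apply, inner_add_right, real_inner_smul_right]
    linarith
  have h3 : inner (𝕜 := ℝ) y (T M y) ≤ ‖y‖ * ‖x‖ := by
    rw [hMy]; exact real_inner_le_norm y x
  have hN : (0:ℝ) ≤ ‖T S⁻¹‖ := norm_nonneg _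
  rw [div_mul_eq_mul_div, le_div_iff₀ hl]
  by_cases hy : ‖y‖ = 0
  · rw [hy, zero_mul]
    positivity
  · have hypos : 0 < ‖y‖ := lt_of_le_of_ne (norm_nonneg y) (Ne.symm hy)
    nlinarith [norm_nonneg x, inner_T_nonneg hS.posSemidef y]

end SGDB

/-- Difference of scaled gains:
`‖λ Q (Q + λS)⁻¹ Q − Q S⁻¹ Q‖ ≤ C³ ‖S⁻¹‖² / λ`. -/
theorem scaled_gain_diff_bound {d : ℕ} (Q S : Matrix (Fin d) (Fin d) ℝ) (C l : ℝ)
    (hQ : Q.PosSemidef) (hS : S.PosDef) (hl : 0 < l)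
    (hQC : matSpectralNorm Q ≤ C) :
    matSpectralNorm (l • (Q * (Q + l • S)⁻¹ * Q) - Q * S⁻¹ * Q)
      ≤ C ^ 3 * matSpectralNorm S⁻¹ ^ 2 / l := by
  classical
  set M := Q + l • S with hMdef
  have hM : M.PosDef := Matrix.PosDef.posSemidef_add hQ (SGDB.smul_posDef hS hl)
  have hMd : IsUnit M.det := (Matrix.isUnit_iff_isUnit_det M).mp hM.isUnit
  have hSd : IsUnit S.det := (Matrix.isUnit_iff_isUnit_det S).mp hS.isUnit
  have hd : M⁻¹ * Q * S⁻¹ = S⁻¹ - l • M⁻¹ := by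
    have hQeq : Q = M - l • S := by rw [hMdef]; abel
    calc M⁻¹ * Q * S⁻¹ = M⁻¹ * (M - l • S) * S⁻¹ := by rw [← hQeq]
      _ = M⁻¹ * M * S⁻¹ - l • (M⁻¹ * (S * S⁻¹)) := by
          rw [Matrix.mul_sub, Matrix.sub_mul, Matrix.mul_smul, Matrix.smul_mul]
          simp only [mul_assoc]
      _ = S⁻¹ - l • M⁻¹ := by
          rw [Matrix.nonsing_inv_mul _ hMd, Matrix.mul_nonsing_inv _ hSd, one_mul, mul_one]
  have key : l • (Q * M⁻¹ * Q) - Q * S⁻¹ * Q = -(Q * M⁻¹ * Q * S⁻¹ * Q) := by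
    have e : Q * (M⁻¹ * Q * S⁻¹) * Q = Q * (S⁻¹ - l • M⁻¹) * Q := by rw [hd]
    rw [Matrix.mul_sub, Matrix.sub_mul, Matrix.mul_smul, Matrix.smul_mul] at e
    have e2 : Q * M⁻¹ * Q * S⁻¹ * Q = Q * (M⁻¹ * Q * S⁻¹) * Q := by
      simp only [mul_assoc]
    rw [e2, e]
    abel
  rw [SGDB.spec_eq, SGDB.spec_eq, key, norm_neg]
  have hC0 : (0:ℝ) ≤ C := le_trans (norm_nonneg _) hQC
  have hQn : ‖Q‖ ≤ C := hQC
  have hMn : ‖M⁻¹‖ ≤ ‖S⁻¹‖ / l := SGDB.inv_norm_bound hQ hS hl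
  calc ‖Q * M⁻¹ * Q * S⁻¹ * Q‖
      ≤ ‖Q * M⁻¹ * Q * S⁻¹‖ * ‖Q‖ := Matrix.l2_opNorm_mul _ _
    _ ≤ (‖Q * M⁻¹ * Q‖ * ‖S⁻¹‖) * ‖Q‖ := by
        gcongr; exact Matrix.l2_opNorm_mul _ _
    _ ≤ ((‖Q * M⁻¹‖ * ‖Q‖) * ‖S⁻¹‖) * ‖Q‖ := by
        gcongr; exact Matrix.l2_opNorm_mul _ _
    _ ≤ (((‖Q‖ * ‖M⁻¹‖) * ‖Q‖) * ‖S⁻¹‖) * ‖Q‖ := by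
        gcongr; exact Matrix.l2_opNorm_mul _ _
    _ ≤ (((C * (‖S⁻¹‖ / l)) * C) * ‖S⁻¹‖) * C := by gcongr
    _ = C ^ 3 * ‖S⁻¹‖ ^ 2 / l := by ring
end
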